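/- Let v_1, ..., v_q be 0/1 vectors in Z^n, each with exactly d nonzero entries (d-uniform). Let B = {(v_1,1), ..., (v_q,1)} in Z^{n+1} and A' = B ∪ {e_1, ..., e_n} (the first n standard unit vectors of Z^{n+1}). Then the cone generated by B equals the intersection of the linear span of B with the cone generated by A', i.e., R_+B = span_R(B) ∩ R_+A'. -/

import Mathlib

open Finset

/-- For 0/1 vectors `v₁,…,v_q` in `ℤⁿ` each with exactly `d` ones,
`B = {(vᵢ,1)}` and `A' = B ∪ {e₁,…,eₙ}`, we have `ℝ₊B = span ℝ B ∩ ℝ₊A'`. -/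
theorem stmt0 (n q d : ℕ) (v : Fin q → Fin n → ℝ)
    (h01 : ∀ j i, v j i = 0 ∨ v j i = 1)
    (hd : ∀ j, ∑ i, v j i = (d : ℝ))
    (B : Fin q → Fin (n + 1) → ℝ) (hB : ∀ j, B j = Fin.snoc (v j) 1)
    (e : Fin n → Fin (n + 1) → ℝ) (he : ∀ i, e i = Pi.single (Fin.castSucc i) 1) :
    {x : Fin (n + 1) → ℝ | ∃ lam : Fin q → ℝ, (∀ j, 0 ≤ lam j) ∧ x = ∑ j, lam j • B j}
      = ↑(Submodule.span ℝ (Set.range B)) ∩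
        {x : Fin (n + 1) → ℝ | ∃ (lam : Fin q → ℝ) (mu : Fin n → ℝ),
          (∀ j, 0 ≤ lam j) ∧ (∀ i, 0 ≤ mu i) ∧
          x = ∑ j, lam j • B j + ∑ i, mu i • e i} := by
  -- the linear functional vanishing on span B
  set L : (Fin (n + 1) → ℝ) →ₗ[ℝ] ℝ :=
    (d : ℝ) • LinearMap.proj (Fin.last n) -
      ∑ i : Fin n, LinearMap.proj (R := ℝ) (φ := fun _ : Fin (n+1) => ℝ) (Fin.castSucc i)
    with hL
  have hLapp : ∀ x : Fin (n + 1) → ℝ,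
      L x = (d : ℝ) * x (Fin.last n) - ∑ i : Fin n, x (Fin.castSucc i) := by
    intro x
    simp [hL, LinearMap.sum_apply]
  have hLB : ∀ j, L (B j) = 0 := by
    intro j
    rw [hLapp, hB j]
    simp [Fin.snoc, hd j]
  have hLe : ∀ i, L (e i) = -1 := by
    intro i
    rw [hLapp, he i]
    have h1 : (Pi.single (M := fun _ : Fin (n+1) => ℝ) (Fin.castSucc i) 1) (Fin.last n) = 0 :=
      by simp [Pi.single_eq_of_ne (Fin.castSucc_lt_last i).ne']
    have h2 : ∑ k : Fin n, (Pi.single (M := fun _ : Fin (n+1) => ℝ) (Fin.castSucc i) 1) (Fin.castSucc k) = 1 := by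
      rw [Finset.sum_eq_single i]
      · simp
      · intro k _ hk
        exact Pi.single_eq_of_ne (fun h => hk (Fin.castSucc_injective n h)) 1
      · simp
    rw [h1, h2]; ring
  ext x
  constructor
  · rintro ⟨lam, hlam, rfl⟩
    refine ⟨Submodule.sum_mem _ fun j _ => Submodule.smul_mem _ _
      (Submodule.subset_span ⟨j, rfl⟩), lam, 0, hlam, fun i => le_refl 0, by simp⟩
  · rintro ⟨hspan, lam, mu, hlam, hmu, hx⟩
    have hLx : L x = 0 := by
      have : ∀ y ∈ Submodule.span ℝ (Set.range B), L y = 0 := by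
        intro y hy
        induction hy using Submodule.span_induction with
        | mem y hy => obtain ⟨j, rfl⟩ := hy; exact hLB j
        | zero => simp
        | add a b _ _ ha hb => rw [map_add, ha, hb, add_zero]
        | smul c a _ ha => rw [map_smul, ha, smul_zero]
      exact this x hspan
    have hLx2 : L x = -∑ i, mu i := by
      rw [hx, map_add, map_sum, map_sum]
      have h1 : ∑ j, L (lam j • B j) = 0 := by
        refine Finset.sum_eq_zero fun j _ => ?_
        rw [map_smul, hLB j, smul_zero]
      have h2 : ∑ i, L (mu i • e i) = -∑ i, mu i := by
        rw [← Finset.sum_neg_distrib]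
        refine Finset.sum_congr rfl fun i _ => ?_
        rw [map_smul, hLe i]; simp
      rw [h1, h2, zero_add]
    have hsum : ∑ i, mu i = 0 := by
      have := hLx.symm.trans hLx2
      linarith
    have hmu0 : ∀ i, mu i = 0 := fun i =>
      le_antisymm (hsum ▸ Finset.single_le_sum (fun k _ => hmu k) (Finset.mem_univ i)) (hmu i)
    refine ⟨lam, hlam, ?_⟩
    rw [hx]
    simp [hmu0]
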